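/- Let S be an m×n real matrix. Consider the 'double game' in which player 1 chooses (x₁ᴬ, x₁ᴮ) ∈ Δ_m × Δ_n, player 2 chooses (x₂ᴬ, x₂ᴮ) ∈ Δ_m × Δ_n, and the payoff (which player 1 minimizes and player 2 maximizes) is F = (x₁ᴬ)ᵀ S x₂ᴮ − (x₁ᴮ)ᵀ Sᵀ x₂ᴬ. Then the value of this game is zero: min over (x₁ᴬ, x₁ᴮ) of max over (x₂ᴬ, x₂ᴮ) of F equals 0. -/

import Mathlib

open Matrix

/-- The bilinear payoff `xᵀ A y = ∑_{i,j} x_i A_{ij} y_j`. -/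
noncomputable def pay {m n : ℕ} (A : Matrix (Fin m) (Fin n) ℝ)
    (x : Fin m → ℝ) (y : Fin n → ℝ) : ℝ :=
  ∑ i, ∑ j, x i * A i j * y j

namespace DoubleGameAux

variable {m n : ℕ}

lemma pay_transpose (S : Matrix (Fin m) (Fin n) ℝ) (x : Fin m → ℝ) (y : Fin n → ℝ) :
    pay Sᵀ y x = pay S x y := by
  unfold pay
  rw [Finset.sum_comm]
  refine Finset.sum_congr rfl fun i _ => Finset.sum_congr rfl fun j _ => ?_
  simp [Matrix.transpose_apply]
  ring

lemma pay_le_of_cols (S : Matrix (Fin m) (Fin n) ℝ) {a : Fin m → ℝ} {y : Fin n → ℝ}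
    (hy : y ∈ stdSimplex ℝ (Fin n)) {v : ℝ} (h : ∀ j, ∑ i, a i * S i j ≤ v) :
    pay S a y ≤ v := by
  have : pay S a y = ∑ j, (∑ i, a i * S i j) * y j := by
    unfold pay
    rw [Finset.sum_comm]
    exact Finset.sum_congr rfl fun j _ => by rw [Finset.sum_mul]
  rw [this]
  calc ∑ j, (∑ i, a i * S i j) * y j ≤ ∑ j, v * y j :=
        Finset.sum_le_sum fun j _ => mul_le_mul_of_nonneg_right (h j) (hy.1 j)
    _ = v := by rw [← Finset.mul_sum, hy.2, mul_one]

lemma le_pay_of_rows (S : Matrix (Fin m) (Fin n) ℝ) {b : Fin n → ℝ} {x : Fin m → ℝ}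
    (hx : x ∈ stdSimplex ℝ (Fin m)) {v : ℝ} (h : ∀ i, v ≤ ∑ j, S i j * b j) :
    v ≤ pay S x b := by
  have : pay S x b = ∑ i, x i * (∑ j, S i j * b j) := by
    unfold pay
    exact Finset.sum_congr rfl fun i _ => by rw [Finset.mul_sum]; simp [mul_assoc]
  rw [this]
  calc v = ∑ i, x i * v := by rw [← Finset.sum_mul, hx.2, one_mul]
    _ ≤ ∑ i, x i * (∑ j, S i j * b j) :=
        Finset.sum_le_sum fun i _ => mul_le_mul_of_nonneg_left (h i) (hx.1 i)

/-- Von Neumann style minimax: there is a pair of strategies `(a, b)` such that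
`aᵀ S y ≤ xᵀ S b` for all strategies `x, y`. -/
lemma exists_good_pair (hm : 0 < m) (hn : 0 < n) (S : Matrix (Fin m) (Fin n) ℝ) :
    ∃ a ∈ stdSimplex ℝ (Fin m), ∃ b ∈ stdSimplex ℝ (Fin n),
      ∀ x ∈ stdSimplex ℝ (Fin m), ∀ y ∈ stdSimplex ℝ (Fin n),
        pay S a y ≤ pay S x b := by
  haveI : NeZero m := ⟨hm.ne'⟩
  haveI : NeZero n := ⟨hn.ne'⟩
  have hne : (Finset.univ : Finset (Fin n)).Nonempty := Finset.univ_nonempty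
  set φ : (Fin m → ℝ) → ℝ := fun a => Finset.univ.sup' hne (fun j => ∑ i, a i * S i j) with hφdef
  have hφc : Continuous φ := by
    rw [continuous_iff_continuousAt]
    intro a
    exact ContinuousAt.finset_sup'_apply hne fun j _ =>
      (Continuous.continuousAt
        (continuous_finset_sum _ fun i _ => (continuous_apply i).mul continuous_const))
  obtain ⟨a, haΔ, hamin⟩ := (isCompact_stdSimplex ℝ (Fin m)).exists_isMinOn
    ⟨Pi.single 0 1, single_mem_stdSimplex ℝ 0⟩ hφc.continuousOn
  set v : ℝ := φ a with hvdef
  -- Key claim: there is b in the simplex with all rows `(S b) i ≥ v`.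
  have hkey : ∃ b ∈ stdSimplex ℝ (Fin n), ∀ i, v ≤ ∑ j, S i j * b j := by
    by_contra hcon
    push_neg at hcon
    set D : Set (Fin m → ℝ) := S.mulVecLin '' stdSimplex ℝ (Fin n) with hD
    set P : Set (Fin m → ℝ) := {z | ∀ i, v ≤ z i} with hP
    have hmulvec : ∀ b : Fin n → ℝ, ∀ i, S.mulVecLin b i = ∑ j, S i j * b j := by
      intro b i
      rfl
    have hdisj : Disjoint D P := by
      rw [Set.disjoint_left]
      rintro z ⟨b, hb, rfl⟩ hzP
      obtain ⟨i, hi⟩ := hcon b hb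
      exact absurd (hzP i) (by rw [hmulvec]; exact not_le.2 hi)
    have hDconv : Convex ℝ D := (convex_stdSimplex ℝ (Fin n)).linear_image _
    have hDcomp : IsCompact D :=
      (isCompact_stdSimplex ℝ (Fin n)).image S.mulVecLin.continuous_of_finiteDimensional
    have hPconv : Convex ℝ P := by
      intro z hz w hw s t hs ht hst i
      have h1 : s * v ≤ s * z i := mul_le_mul_of_nonneg_left (hz i) hs
      have h2 : t * v ≤ t * w i := mul_le_mul_of_nonneg_left (hw i) ht
      have h4 : s * v + t * v = v := by rw [← add_mul, hst, one_mul]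
      simp only [Pi.add_apply, Pi.smul_apply, smul_eq_mul]
      linarith
    have hPclosed : IsClosed P := by
      have : P = ⋂ i, {z : Fin m → ℝ | v ≤ z i} := by
        ext z; simp [hP]
      rw [this]
      exact isClosed_iInter fun i => isClosed_le continuous_const (continuous_apply i)
    obtain ⟨f, u₁, u₂, hfD, hu, hfP⟩ :=
      geometric_hahn_banach_compact_closed hDconv hDcomp hPconv hPclosed hdisj
    set c : Fin m → ℝ := fun i => f (Pi.single i 1) with hc
    have hf_apply : ∀ z : Fin m → ℝ, f z = ∑ i, z i * c i := by
      intro z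
      have hz : z = ∑ i, z i • (Pi.single i 1 : Fin m → ℝ) := by
        conv_lhs => rw [← Finset.univ_sum_single z]
        exact Finset.sum_congr rfl fun i _ => by
          ext k; simp [Pi.single_apply]
      conv_lhs => rw [hz]
      rw [map_sum]
      exact Finset.sum_congr rfl fun i _ => by rw [_root_.map_smul]; simp [hc, smul_eq_mul]
    have hfv1 : f (fun _ => v) = v * ∑ i, c i := by
      rw [hf_apply, Finset.mul_sum]
    have hv1P : (fun _ => v) ∈ P := fun i => le_refl v
    have hcnonneg : ∀ i, 0 ≤ c i := by
      intro i
      by_contra hci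
      push_neg at hci
      set t : ℝ := max ((u₂ - f (fun _ => v)) / c i + 1) 0 with ht
      have ht0 : 0 ≤ t := le_max_right _ _
      have hmem : ((fun _ => v) + t • (Pi.single i 1 : Fin m → ℝ) : Fin m → ℝ) ∈ P := by
        intro k
        simp only [Pi.add_apply, Pi.smul_apply, smul_eq_mul]
        have : 0 ≤ t * (Pi.single i 1 : Fin m → ℝ) k := by
          apply mul_nonneg ht0
          by_cases hk : k = i <;> simp [Pi.single_apply, hk]
        linarith
      have h1 : u₂ < f ((fun _ => v) + t • (Pi.single i 1 : Fin m → ℝ)) := hfP _ hmem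
      rw [map_add, _root_.map_smul] at h1
      have h2 : t * c i < u₂ - f (fun _ => v) := by
        have hgt : (u₂ - f (fun _ => v)) / c i < t :=
          lt_of_lt_of_le (lt_add_one _) (le_max_left _ _)
        have := mul_lt_mul_of_neg_right hgt hci
        rwa [div_mul_cancel₀ _ hci.ne] at this
      simp only [smul_eq_mul] at h1
      linarith
    have hDne : ∃ d ∈ D, True := ⟨S.mulVecLin (Pi.single 0 1),
      ⟨Pi.single 0 1, single_mem_stdSimplex ℝ 0, rfl⟩, trivial⟩
    have hTpos : 0 < ∑ i, c i := by
      rcases lt_or_eq_of_le (Finset.sum_nonneg fun i _ => hcnonneg i) with h | h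
      · exact h
      · exfalso
        have hall : ∀ i ∈ Finset.univ, c i = 0 :=
          (Finset.sum_eq_zero_iff_of_nonneg fun i _ => hcnonneg i).1 h.symm
        obtain ⟨d, hdD, -⟩ := hDne
        have h1 : f d < u₁ := hfD d hdD
        have h2 : u₂ < f (fun _ => v) := hfP _ hv1P
        have h3 : f d = 0 := by
          rw [hf_apply]; exact Finset.sum_eq_zero fun i _ => by rw [hall i (Finset.mem_univ i), mul_zero]
        have h4 : f (fun _ => v) = 0 := by
          rw [hf_apply]; exact Finset.sum_eq_zero fun i _ => by rw [hall i (Finset.mem_univ i), mul_zero]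
        linarith
    set a' : Fin m → ℝ := fun i => c i / (∑ i, c i) with ha'
    have ha'Δ : a' ∈ stdSimplex ℝ (Fin m) := by
      constructor
      · exact fun i => div_nonneg (hcnonneg i) hTpos.le
      · rw [← Finset.sum_div, div_self hTpos.ne']
    have hcols : ∀ j, ∑ i, a' i * S i j < v := by
      intro j
      have hcolD : S.mulVecLin (Pi.single j 1) ∈ D :=
        ⟨Pi.single j 1, single_mem_stdSimplex ℝ j, rfl⟩
      have h1 : f (S.mulVecLin (Pi.single j 1)) < u₁ := hfD _ hcolD
      have h2 : u₂ < v * ∑ i, c i := by rw [← hfv1]; exact hfP _ hv1P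
      have hcolval : f (S.mulVecLin (Pi.single j 1)) = ∑ i, S i j * c i := by
        rw [hf_apply]
        refine Finset.sum_congr rfl fun i _ => ?_
        rw [hmulvec]
        congr 1
        simp [Pi.single_apply, Finset.sum_ite_eq', Finset.mem_univ]
      have h3 : ∑ i, S i j * c i < v * ∑ i, c i := by
        rw [← hcolval]; linarith
      have h4 : ∑ i, a' i * S i j = (∑ i, S i j * c i) / (∑ i, c i) := by
        rw [Finset.sum_div]
        exact Finset.sum_congr rfl fun i _ => by rw [ha']; ring
      rw [h4, div_lt_iff₀ hTpos]
      linarith [h3]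
    have hφa' : φ a' < v := by
      rw [hφdef]
      exact (Finset.sup'_lt_iff hne).2 fun j _ => hcols j
    exact absurd (hamin ha'Δ) (not_le.2 hφa')
  obtain ⟨b, hbΔ, hbv⟩ := hkey
  refine ⟨a, haΔ, b, hbΔ, fun x hx y hy => ?_⟩
  have h1 : pay S a y ≤ v :=
    pay_le_of_cols S hy fun j => Finset.le_sup' (fun j => ∑ i, a i * S i j) (Finset.mem_univ j)
  have h2 : v ≤ pay S x b := le_pay_of_rows S hx hbv
  linarith

end DoubleGameAux

open DoubleGameAux in
/-- The value of the 'double game' with payoff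
`F = (x₁ᴬ)ᵀ S x₂ᴮ − (x₁ᴮ)ᵀ Sᵀ x₂ᴬ` (player 1 minimizing over
`(x₁ᴬ, x₁ᴮ) ∈ Δ_m × Δ_n`, player 2 maximizing over `(x₂ᴬ, x₂ᴮ) ∈ Δ_m × Δ_n`)
is zero. -/
theorem double_game_value_zero {m n : ℕ} (S : Matrix (Fin m) (Fin n) ℝ) :
    sInf ((fun x₁ : (Fin m → ℝ) × (Fin n → ℝ) =>
        sSup ((fun x₂ : (Fin m → ℝ) × (Fin n → ℝ) =>
            pay S x₁.1 x₂.2 - pay Sᵀ x₁.2 x₂.1) ''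
          (stdSimplex ℝ (Fin m) ×ˢ stdSimplex ℝ (Fin n)))) ''
      (stdSimplex ℝ (Fin m) ×ˢ stdSimplex ℝ (Fin n))) = 0 := by
  rcases Nat.eq_zero_or_pos m with hm | hm
  · subst hm
    have : stdSimplex ℝ (Fin 0) = ∅ := stdSimplex_of_isEmpty_index ℝ (Fin 0)
    rw [this]
    simp [Real.sInf_empty]
  rcases Nat.eq_zero_or_pos n with hn | hn
  · subst hn
    have : stdSimplex ℝ (Fin 0) = ∅ := stdSimplex_of_isEmpty_index ℝ (Fin 0)
    rw [this]
    simp [Real.sInf_empty]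
  haveI : NeZero m := ⟨hm.ne'⟩
  haveI : NeZero n := ⟨hn.ne'⟩
  set T : Set ((Fin m → ℝ) × (Fin n → ℝ)) := stdSimplex ℝ (Fin m) ×ˢ stdSimplex ℝ (Fin n) with hT
  set F : (Fin m → ℝ) × (Fin n → ℝ) → (Fin m → ℝ) × (Fin n → ℝ) → ℝ :=
    fun x₁ x₂ => pay S x₁.1 x₂.2 - pay Sᵀ x₁.2 x₂.1 with hF
  have hTcomp : IsCompact T := (isCompact_stdSimplex ℝ (Fin m)).prod (isCompact_stdSimplex ℝ (Fin n))
  have hTne : T.Nonempty :=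
    ⟨(Pi.single 0 1, Pi.single 0 1), single_mem_stdSimplex ℝ 0, single_mem_stdSimplex ℝ 0⟩
  have hFcont : ∀ x₁, Continuous (F x₁) := by
    intro x₁
    apply Continuous.sub
    · exact continuous_finset_sum _ fun i _ => continuous_finset_sum _ fun j _ =>
        continuous_const.mul ((continuous_apply j).comp continuous_snd)
    · exact continuous_finset_sum _ fun j _ => continuous_finset_sum _ fun i _ =>
        continuous_const.mul ((continuous_apply i).comp continuous_fst)
  have hFself : ∀ p : (Fin m → ℝ) × (Fin n → ℝ), F p p = 0 := by
    intro p
    simp only [hF, pay_transpose S p.1 p.2, sub_self]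
  have h0le : ∀ p ∈ T, (0 : ℝ) ≤ sSup (F p '' T) := by
    intro p hp
    have hbdd : BddAbove (F p '' T) := (hTcomp.image (hFcont p)).bddAbove
    have h0mem : (0 : ℝ) ∈ F p '' T := ⟨p, hp, hFself p⟩
    exact le_csSup hbdd h0mem
  obtain ⟨a, haΔ, b, hbΔ, hab⟩ := exists_good_pair hm hn S
  have habT : ((a, b) : (Fin m → ℝ) × (Fin n → ℝ)) ∈ T := ⟨haΔ, hbΔ⟩
  have hle0 : sSup (F (a, b) '' T) ≤ 0 := by
    apply csSup_le (hTne.image _)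
    rintro z ⟨⟨x, y⟩, ⟨hx, hy⟩, rfl⟩
    have := hab x hx y hy
    have hpt : pay Sᵀ b x = pay S x b := pay_transpose S x b
    simp only [hF]
    rw [hpt]
    linarith
  have h0mem : (0 : ℝ) ∈ (fun x₁ => sSup (F x₁ '' T)) '' T :=
    ⟨(a, b), habT, le_antisymm hle0 (h0le _ habT)⟩
  apply le_antisymm
  · exact csInf_le ⟨0, by rintro z ⟨p, hp, rfl⟩; exact h0le p hp⟩ h0mem
  · exact le_csInf ⟨0, h0mem⟩ (by rintro z ⟨p, hp, rfl⟩; exact h0le p hp)
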